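/- Let A₁,…,A_m be subspaces of a finite-dimensional vector space U over a field. For each i ∈ [m] let Â_i = ∩_{j ≠ i} A_j be the intersection of all the subspaces except A_i, and let V₀ = A₁ ∩ … ∩ A_m. Then the family V₀, Â₁,…,Â_m (all the (m−1)-fold intersections together with the full intersection) is coordinated. -/

import Mathlib

/-- Let `A₁, …, A_m` be subspaces of a finite-dimensional vector space.
For each `i`, let `Â_i = ⋂_{j ≠ i} A_j`, and let `V₀ = A₁ ∩ … ∩ A_m`. Then the family
`V₀, Â₁, …, Â_m` is coordinated. -/
theorem codimOne_intersections_coordinated {𝔽 U : Type*} [Field 𝔽] [AddCommGroup U]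
    [Module 𝔽 U] [FiniteDimensional 𝔽 U] {m : ℕ} (A : Fin m → Submodule 𝔽 U) :
    ∃ X : Set U, LinearIndependent 𝔽 (fun x : X => (x : U)) ∧
      Submodule.span 𝔽 (X ∩ ((⨅ j, A j : Submodule 𝔽 U) : Set U)) = ⨅ j, A j ∧
      ∀ i, Submodule.span 𝔽
          (X ∩ ((⨅ j, ⨅ _ : j ≠ i, A j : Submodule 𝔽 U) : Set U)) =
        ⨅ j, ⨅ _ : j ≠ i, A j := by
  classical
  set V0 : Submodule 𝔽 U := ⨅ j, A j with hV0
  set Ah : Fin m → Submodule 𝔽 U := fun i => ⨅ j, ⨅ _ : j ≠ i, A j with hAh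
  have hV0le : ∀ i, V0 ≤ Ah i := fun i =>
    le_iInf fun j => le_iInf fun _ => iInf_le _ j
  have hAhle : ∀ i j, j ≠ i → Ah i ≤ A j := fun i j hj =>
    (iInf_le _ j).trans (iInf_le _ hj)
  have hinf : ∀ i, Ah i ⊓ A i = V0 := by
    intro i
    apply le_antisymm
    · exact le_iInf fun j => by
        by_cases h : j = i
        · subst h; exact inf_le_right
        · exact inf_le_left.trans (hAhle i j h)
    · exact le_inf (hV0le i) (iInf_le _ i)
  -- choose a basis B₀ of V₀
  obtain ⟨B0, hB0sub, hB0span, hB0ind⟩ := exists_linearIndependent 𝔽 (V0 : Set U)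
  rw [Submodule.span_eq] at hB0span
  -- extend B₀ to a basis of each Ah i
  have hext : ∀ i, ∃ b ⊆ (Ah i : Set U), B0 ⊆ b ∧ (Ah i : Set U) ⊆ Submodule.span 𝔽 b ∧
      LinearIndependent 𝔽 ((↑) : b → U) := fun i =>
    exists_linearIndepOn_id_extension hB0ind (hB0sub.trans (hV0le i))
  choose B hBsub hB0B hBspan hBind using hext
  have hBspan' : ∀ i, Submodule.span 𝔽 (B i) = Ah i := fun i =>
    le_antisymm (Submodule.span_le.2 (hBsub i)) (fun x hx => hBspan i hx)
  set C : Fin m → Set U := fun i => B i \ B0 with hC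
  have hBeq : ∀ i, B i = B0 ∪ C i := fun i =>
    (Set.union_diff_cancel (hB0B i)).symm
  have hCsub : ∀ i, Submodule.span 𝔽 (C i) ≤ Ah i := fun i =>
    Submodule.span_le.2 ((Set.diff_subset).trans (hBsub i))
  -- disjointness of span C i from V₀
  have hDisj : ∀ i, Disjoint (Submodule.span 𝔽 (C i)) V0 := by
    intro i
    have hd := (hBind i).disjoint_span_image
      (s := (↑) ⁻¹' (C i)) (t := (↑) ⁻¹' B0)
      (Set.disjoint_sdiff_left.preimage _)
    have h1 : (↑) '' ((↑) ⁻¹' (C i) : Set (B i)) = C i := by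
      rw [Subtype.image_preimage_coe]
      exact Set.inter_eq_right.mpr Set.diff_subset
    have h2 : (↑) '' ((↑) ⁻¹' B0 : Set (B i)) = B0 := by
      rw [Subtype.image_preimage_coe]
      exact Set.inter_eq_right.mpr (hB0B i)
    rw [h1, h2, hB0span] at hd
    exact hd
  -- key finite induction: V₀ is disjoint from the span of all the C j's
  have hKey : ∀ t : Finset (Fin m), Disjoint V0 (⨆ j ∈ t, Submodule.span 𝔽 (C j)) := by
    intro t
    induction t using Finset.induction_on with
    | empty => simp
    | @insert a s ha ih =>
      rw [Finset.iSup_insert]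
      rw [disjoint_iff, eq_bot_iff]
      rintro v hv
      rw [Submodule.mem_inf] at hv
      obtain ⟨hv0, hvs⟩ := hv
      obtain ⟨c, hc, w, hw, rfl⟩ := Submodule.mem_sup.1 hvs
      have hwA : w ∈ A a := by
        have hle : (⨆ x ∈ s, Submodule.span 𝔽 (C x)) ≤ A a := by
          refine iSup₂_le fun j hj => ?_
          have hja : j ≠ a := fun h => ha (h ▸ hj)
          exact (hCsub j).trans (hAhle j a (Ne.symm hja))
        exact hle hw
      have hcV0 : c ∈ V0 := by
        rw [← hinf a]
        refine Submodule.mem_inf.2 ⟨hCsub a hc, ?_⟩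
        have : c = (c + w) - w := (add_sub_cancel_right c w).symm
        rw [this]
        exact sub_mem ((iInf_le A a : V0 ≤ A a) hv0) hwA
      have hc0 : c = 0 := by
        have := (hDisj a).le_bot (Submodule.mem_inf.2 ⟨hc, hcV0⟩)
        simpa using this
      subst hc0
      rw [zero_add] at hv0 ⊢
      exact ih.le_bot (Submodule.mem_inf.2 ⟨hv0, hw⟩)
  -- assemble the coordinating set
  set f : Option (Fin m) → Set U := fun o => Option.elim o B0 C with hf
  refine ⟨⋃ o, f o, ?_, ?_, ?_⟩
  · apply linearIndepOn_id_iUnion_finite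
    · rintro (_ | i)
      · exact hB0ind
      · exact LinearIndepOn.mono (hBind i) Set.diff_subset
    · rintro (_ | i) t ht hit
      · -- f none = B0, span = V₀; the others are C j's
        have hle : (⨆ o ∈ t, Submodule.span 𝔽 (f o)) ≤
            ⨆ j ∈ (Finset.univ : Finset (Fin m)), Submodule.span 𝔽 (C j) := by
          refine iSup₂_le fun o ho => ?_
          match o with
          | none => exact absurd ho hit
          | some j =>
            exact le_biSup (fun j => Submodule.span 𝔽 (C j)) (Finset.mem_univ j)
        have hfn : Submodule.span 𝔽 (f none) = V0 := hB0span
        rw [hfn]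
        exact (hKey Finset.univ).mono_right hle
      · -- f (some i) = C i
        have hle : (⨆ o ∈ t, Submodule.span 𝔽 (f o)) ≤ A i := by
          refine iSup₂_le fun o ho => ?_
          match o with
          | none =>
            show Submodule.span 𝔽 B0 ≤ A i
            rw [hB0span]
            exact iInf_le _ i
          | some j =>
            have hji : j ≠ i := fun h => hit (h ▸ ho)
            exact (hCsub j).trans (hAhle j i (Ne.symm hji))
        rw [disjoint_iff, eq_bot_iff]
        intro v hv
        rw [Submodule.mem_inf] at hv
        obtain ⟨hv1, hv2⟩ := hv
        have hvV0 : v ∈ V0 := by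
          rw [← hinf i]
          exact Submodule.mem_inf.2 ⟨hCsub i hv1, hle hv2⟩
        simpa using (hDisj i).le_bot (Submodule.mem_inf.2 ⟨hv1, hvV0⟩)
  · -- span of X ∩ V₀ = V₀
    apply le_antisymm
    · exact Submodule.span_le.2 (Set.inter_subset_right)
    · calc V0 = Submodule.span 𝔽 B0 := hB0span.symm
        _ ≤ _ := by
          apply Submodule.span_mono
          intro x hx
          exact ⟨Set.mem_iUnion.2 ⟨none, hx⟩, hB0sub hx⟩
  · -- span of X ∩ Ah i = Ah i
    intro i
    apply le_antisymm
    · exact Submodule.span_le.2 (Set.inter_subset_right)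
    · show Ah i ≤ Submodule.span 𝔽 ((⋃ o, f o) ∩ (Ah i : Set U))
      calc Ah i = Submodule.span 𝔽 (B i) := (hBspan' i).symm
        _ ≤ _ := by
          apply Submodule.span_mono
          intro x hx
          refine ⟨?_, hBsub i hx⟩
          by_cases hx0 : x ∈ B0
          · exact Set.mem_iUnion.2 ⟨none, hx0⟩
          · exact Set.mem_iUnion.2 ⟨some i, hx, hx0⟩
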